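/- Let Φ be a real N×p matrix and let y ∈ ℝ^N satisfy y_n ≥ 0 for all n. Then the concentrated Poisson log-link negative log-likelihood L_c(x) = (Σ_{n=1}^{N} y_n)·ln(Σ_{n=1}^{N} exp(−(Φx)_n)) + Σ_{n=1}^{N} y_n·(Φx)_n is a convex function of x on all of ℝ^p. -/

import Mathlib

open Finset

lemma lse_ineq {N : ℕ} (z w : Fin N → ℝ) {a b : ℝ} (ha : 0 ≤ a) (hb : 0 ≤ b)
    (hab : a + b = 1) :
    Real.log (∑ n, Real.exp (a * z n + b * w n)) ≤
      a * Real.log (∑ n, Real.exp (z n)) + b * Real.log (∑ n, Real.exp (w n)) := by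
  rcases Nat.eq_zero_or_pos N with hN | hN
  · subst hN; simp
  rcases eq_or_lt_of_le ha with ha0 | ha'
  · have hb1 : b = 1 := by linarith
    simp [← ha0, hb1]
  rcases eq_or_lt_of_le hb with hb0 | hb'
  · have ha1 : a = 1 := by linarith
    simp [← hb0, ha1]
  have ha1 : a < 1 := by linarith
  have hpq : Real.HolderConjugate (1/a) (1/b) := Real.holderConjugate_one_div ha' hb' hab
  have key : ∑ n, Real.exp (a * z n + b * w n) ≤
      (∑ n, Real.exp (z n)) ^ a * (∑ n, Real.exp (w n)) ^ b := by
    have h := Real.inner_le_Lp_mul_Lq_of_nonneg (s := Finset.univ)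
      (f := fun n => Real.exp (a * z n)) (g := fun n => Real.exp (b * w n)) hpq
      (fun i _ => (Real.exp_pos _).le) (fun i _ => (Real.exp_pos _).le)
    simp only [one_div_one_div] at h
    calc ∑ n, Real.exp (a * z n + b * w n)
        = ∑ n, Real.exp (a * z n) * Real.exp (b * w n) := by
          simp [Real.exp_add]
      _ ≤ (∑ n, Real.exp (a * z n) ^ (1/a)) ^ a * (∑ n, Real.exp (b * w n) ^ (1/b)) ^ b := h
      _ = (∑ n, Real.exp (z n)) ^ a * (∑ n, Real.exp (w n)) ^ b := by
          congr 2 <;> apply Finset.sum_congr rfl <;> intro i _ <;>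
            rw [← Real.exp_mul] <;> congr 1 <;> field_simp
  have hzs : 0 < ∑ n, Real.exp (z n) := by
    apply Finset.sum_pos (fun i _ => Real.exp_pos _)
    exact Finset.univ_nonempty_iff.mpr (Fin.pos_iff_nonempty.mp hN)
  have hws : 0 < ∑ n, Real.exp (w n) := by
    apply Finset.sum_pos (fun i _ => Real.exp_pos _)
    exact Finset.univ_nonempty_iff.mpr (Fin.pos_iff_nonempty.mp hN)
  calc Real.log (∑ n, Real.exp (a * z n + b * w n))
      ≤ Real.log ((∑ n, Real.exp (z n)) ^ a * (∑ n, Real.exp (w n)) ^ b) := by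
        apply Real.log_le_log _ key
        exact Finset.sum_pos (fun i _ => Real.exp_pos _)
          (Finset.univ_nonempty_iff.mpr (Fin.pos_iff_nonempty.mp hN))
    _ = a * Real.log (∑ n, Real.exp (z n)) + b * Real.log (∑ n, Real.exp (w n)) := by
        rw [Real.log_mul (by positivity) (by positivity),
          Real.log_rpow hzs, Real.log_rpow hws]

/-- For a real `N×p` matrix `Φ` and nonnegative `y ∈ ℝ^N`, the
concentrated Poisson log-link negative log-likelihood
`L_c(x) = (Σ_n y_n) ln(Σ_n exp(−(Φx)_n)) + Σ_n y_n (Φx)_n` is convex on all of `ℝ^p`. -/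
theorem concentrated_poisson_nll_convex (N p : ℕ)
    (Φ : Matrix (Fin N) (Fin p) ℝ) (y : Fin N → ℝ) (hy : ∀ n, 0 ≤ y n) :
    ConvexOn ℝ Set.univ (fun x : Fin p → ℝ =>
      (∑ n, y n) * Real.log (∑ n, Real.exp (-(Φ.mulVec x n))) +
        ∑ n, y n * Φ.mulVec x n) := by
  refine ⟨convex_univ, fun x _ x' _ a b ha hb hab => ?_⟩
  have hmv : Φ.mulVec (a • x + b • x') = a • Φ.mulVec x + b • Φ.mulVec x' := by
    rw [Matrix.mulVec_add, Matrix.mulVec_smul, Matrix.mulVec_smul]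
  have hlse := lse_ineq (fun n => -(Φ.mulVec x n)) (fun n => -(Φ.mulVec x' n)) ha hb hab
  have hys : 0 ≤ ∑ n, y n := Finset.sum_nonneg fun n _ => hy n
  have hlin : ∑ n, y n * Φ.mulVec (a • x + b • x') n =
      a * ∑ n, y n * Φ.mulVec x n + b * ∑ n, y n * Φ.mulVec x' n := by
    simp only [hmv, Pi.add_apply, Pi.smul_apply, smul_eq_mul, Finset.mul_sum,
      ← Finset.sum_add_distrib]
    apply Finset.sum_congr rfl
    intro n _; ring
  simp only [smul_eq_mul, hlin]
  have hlog : Real.log (∑ n, Real.exp (-(Φ.mulVec (a • x + b • x') n))) ≤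
      a * Real.log (∑ n, Real.exp (-(Φ.mulVec x n))) +
        b * Real.log (∑ n, Real.exp (-(Φ.mulVec x' n))) := by
    have : ∀ n, -(Φ.mulVec (a • x + b • x') n) =
        a * (-(Φ.mulVec x n)) + b * (-(Φ.mulVec x' n)) := by
      intro n; simp [hmv]; ring
    simp only [this]
    exact hlse
  nlinarith [mul_le_mul_of_nonneg_left hlog hys]
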